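/- Let 𝐀_F = (1/C(N,n)²) ∑_{I,I'⊆[N], |I|=|I'|=n} R_I^⊤ X_{I,F}(X_{I,F}^⊤X_{I,F})^{-1}(X_{I',F}^⊤X_{I',F})^{-1}X_{I',F}^⊤ R_{I'} ∈ ℝ^{N×N}, where each X_{I,F} has full column rank m. Then tr(𝐀_F) ≤ (mn/N)·(1/C(N,n)) ∑_{I⊆[N],|I|=n} σ_min^{-2}(X_{I,F}). -/

import Mathlib

open Finset Matrix

/-- Row/coordinate selection matrix R_I ∈ ℝ^{k×N} for a size-k subset I of Fin N. -/
noncomputable def selMat {N k : ℕ} (I : Finset (Fin N)) (h : I.card = k) :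
    Matrix (Fin k) (Fin N) ℝ :=
  Matrix.of fun a j => if (↑(I.orderIsoOfFin h a) : Fin N) = j then (1 : ℝ) else 0

/-- Minipatch submatrix X_{I,F} = R_I X R_Fᵀ. -/
noncomputable def mpMat (N M n m : ℕ) (X : Matrix (Fin N) (Fin M) ℝ)
    (F : Finset (Fin M)) (hF : F.card = m) (I : Finset (Fin N)) (hI : I.card = n) :
    Matrix (Fin n) (Fin m) ℝ :=
  selMat I hI * X * (selMat F hF)ᵀ

/-- Smallest squared singular value σ_min(A)², via the Rayleigh quotient. -/
noncomputable def sminSq {n m : ℕ} (A : Matrix (Fin n) (Fin m) ℝ) : ℝ :=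
  ⨅ v : {v : Fin m → ℝ // ∑ j, (v j) ^ 2 = 1}, ∑ i, (A.mulVec v.1 i) ^ 2

/-- The matrix 𝐀_F = (1/C(N,n)²) ∑_{I,I'} R_Iᵀ X_{I,F}(X_{I,F}ᵀX_{I,F})⁻¹(X_{I',F}ᵀX_{I',F})⁻¹X_{I',F}ᵀ R_{I'}. -/
noncomputable def AF (N M n m : ℕ) (X : Matrix (Fin N) (Fin M) ℝ)
    (F : Finset (Fin M)) (hF : F.card = m) : Matrix (Fin N) (Fin N) ℝ :=
  ((N.choose n : ℝ) ^ 2)⁻¹ •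
    ∑ I ∈ (Finset.powersetCard n (Finset.univ : Finset (Fin N))).attach,
      ∑ J ∈ (Finset.powersetCard n (Finset.univ : Finset (Fin N))).attach,
        (selMat I.1 (Finset.mem_powersetCard.mp I.2).2)ᵀ *
          mpMat N M n m X F hF I.1 (Finset.mem_powersetCard.mp I.2).2 *
          ((mpMat N M n m X F hF I.1 (Finset.mem_powersetCard.mp I.2).2)ᵀ *
            mpMat N M n m X F hF I.1 (Finset.mem_powersetCard.mp I.2).2)⁻¹ *
          ((mpMat N M n m X F hF J.1 (Finset.mem_powersetCard.mp J.2).2)ᵀ *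
            mpMat N M n m X F hF J.1 (Finset.mem_powersetCard.mp J.2).2)⁻¹ *
          (mpMat N M n m X F hF J.1 (Finset.mem_powersetCard.mp J.2).2)ᵀ *
          selMat J.1 (Finset.mem_powersetCard.mp J.2).2

lemma mulVec_sq_le {n m : ℕ} (A : Matrix (Fin n) (Fin m) ℝ) (v : Fin m → ℝ) :
    ∑ i, (A.mulVec v i) ^ 2 ≤ (∑ i, ∑ j, (A i j) ^ 2) * ∑ j, (v j) ^ 2 := by
  rw [Finset.sum_mul]
  refine Finset.sum_le_sum fun i _ => ?_
  simpa [Matrix.mulVec, dotProduct] using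
    Finset.sum_mul_sq_le_sq_mul_sq Finset.univ (fun j => A i j) v

lemma sminSq_nonneg {n m : ℕ} (A : Matrix (Fin n) (Fin m) ℝ) : 0 ≤ sminSq A :=
  Real.iInf_nonneg fun v => Finset.sum_nonneg fun i _ => sq_nonneg _

lemma sminSq_rayleigh {n m : ℕ} (A : Matrix (Fin n) (Fin m) ℝ) (v : Fin m → ℝ) :
    sminSq A * ∑ j, (v j) ^ 2 ≤ ∑ i, (A.mulVec v i) ^ 2 := by
  rcases eq_or_ne (∑ j, (v j) ^ 2) 0 with h | h
  · have hv : v = 0 := by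
      funext j
      have := (Finset.sum_eq_zero_iff_of_nonneg (fun j _ => sq_nonneg (v j))).mp h j (by simp)
      exact pow_eq_zero_iff (n := 2) (by norm_num) |>.mp this
    simp [h, hv]
  · have hs : 0 < ∑ j, (v j) ^ 2 :=
      lt_of_le_of_ne (Finset.sum_nonneg fun j _ => sq_nonneg _) (Ne.symm h)
    set s := ∑ j, (v j) ^ 2
    set c : ℝ := (Real.sqrt s)⁻¹ with hc
    have hcs : c ^ 2 = s⁻¹ := by
      rw [hc, ← Real.sqrt_inv]
      exact Real.sq_sqrt (by positivity)
    have hu : ∑ j, ((c • v) j) ^ 2 = 1 := by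
      simp only [Pi.smul_apply, smul_eq_mul, mul_pow, ← Finset.mul_sum]
      rw [hcs]
      exact inv_mul_cancel₀ h
    have hle : sminSq A ≤ ∑ i, (A.mulVec (c • v) i) ^ 2 := by
      exact ciInf_le ⟨0, by rintro x ⟨w, rfl⟩; exact Finset.sum_nonneg fun i _ => sq_nonneg _⟩
        (⟨c • v, hu⟩ : {v : Fin m → ℝ // ∑ j, (v j) ^ 2 = 1})
    have hmv : ∑ i, (A.mulVec (c • v) i) ^ 2 = s⁻¹ * ∑ i, (A.mulVec v i) ^ 2 := by
      simp only [Matrix.mulVec_smul, Pi.smul_apply, smul_eq_mul, mul_pow, ← Finset.mul_sum, hcs]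
    rw [hmv] at hle
    calc sminSq A * s ≤ (s⁻¹ * ∑ i, (A.mulVec v i) ^ 2) * s :=
          mul_le_mul_of_nonneg_right hle hs.le
      _ = ∑ i, (A.mulVec v i) ^ 2 := by field_simp

lemma gram_symm {n m : ℕ} (A : Matrix (Fin n) (Fin m) ℝ) : (Aᵀ * A)ᵀ = Aᵀ * A := by
  rw [Matrix.transpose_mul, Matrix.transpose_transpose]

lemma gram_inv_symm {n m : ℕ} (A : Matrix (Fin n) (Fin m) ℝ) :
    ((Aᵀ * A)⁻¹)ᵀ = (Aᵀ * A)⁻¹ := by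
  rw [Matrix.transpose_nonsing_inv, gram_symm]

lemma sminSq_pos {n m : ℕ} (hm : 0 < m) (A : Matrix (Fin n) (Fin m) ℝ)
    (h : IsUnit (Aᵀ * A).det) : 0 < sminSq A := by
  set G := Aᵀ * A with hG
  set g := ∑ j, ∑ k, (G⁻¹ j k) ^ 2 with hg
  set t := ∑ j, ∑ i, (Aᵀ j i) ^ 2 with ht
  -- key claim : for every unit v, 1 ≤ g * t * ∑ (A v)²
  have key : ∀ v : Fin m → ℝ, (∑ j, (v j) ^ 2 = 1) →
      1 ≤ g * t * ∑ i, (A.mulVec v i) ^ 2 := by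
    intro v hv
    have h1 : (G⁻¹ *ᵥ v) ⬝ᵥ (G *ᵥ v) = v ⬝ᵥ v := by
      rw [Matrix.dotProduct_mulVec, ← Matrix.mulVec_transpose, gram_symm,
        Matrix.mulVec_mulVec, Matrix.mul_nonsing_inv _ h, Matrix.one_mulVec]
    have h2 : v ⬝ᵥ v = 1 := by
      simpa [dotProduct, pow_two] using hv
    have hcs : 1 ≤ (∑ j, ((G⁻¹ *ᵥ v) j) ^ 2) * (∑ j, ((G *ᵥ v) j) ^ 2) := by
      have := Finset.sum_mul_sq_le_sq_mul_sq Finset.univ (fun j => (G⁻¹ *ᵥ v) j)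
        (fun j => (G *ᵥ v) j)
      have e : ∑ j, (G⁻¹ *ᵥ v) j * (G *ᵥ v) j = 1 := by
        rw [← h2, ← h1]; rfl
      rw [e] at this; simpa using this
    have hb1 : ∑ j, ((G⁻¹ *ᵥ v) j) ^ 2 ≤ g := by
      have := mulVec_sq_le G⁻¹ v
      rwa [hv, mul_one] at this
    have hb2 : ∑ j, ((G *ᵥ v) j) ^ 2 ≤ t * ∑ i, (A.mulVec v i) ^ 2 := by
      have e : G *ᵥ v = Aᵀ *ᵥ (A *ᵥ v) := by rw [hG, Matrix.mulVec_mulVec]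
      rw [e]
      exact mulVec_sq_le Aᵀ (A *ᵥ v)
    have hq1 : (0:ℝ) ≤ ∑ j, ((G⁻¹ *ᵥ v) j) ^ 2 := Finset.sum_nonneg fun _ _ => sq_nonneg _
    have hq2 : (0:ℝ) ≤ ∑ j, ((G *ᵥ v) j) ^ 2 := Finset.sum_nonneg fun _ _ => sq_nonneg _
    calc (1:ℝ) ≤ (∑ j, ((G⁻¹ *ᵥ v) j) ^ 2) * (∑ j, ((G *ᵥ v) j) ^ 2) := hcs
      _ ≤ g * (t * ∑ i, (A.mulVec v i) ^ 2) := by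
          exact mul_le_mul hb1 hb2 hq2 (le_trans hq1 hb1)
      _ = g * t * ∑ i, (A.mulVec v i) ^ 2 := by ring
  -- a particular unit vector
  set v0 : Fin m → ℝ := fun j => if j = ⟨0, hm⟩ then 1 else 0 with hv0
  have hunit : ∑ j, (v0 j) ^ 2 = 1 := by
    simp [hv0, Finset.sum_ite_eq', apply_ite (fun x : ℝ => x ^ 2)]
  have hX0 : (0:ℝ) ≤ ∑ i, (A.mulVec v0 i) ^ 2 := Finset.sum_nonneg fun _ _ => sq_nonneg _
  have hgt : 0 < g * t := by
    by_contra hle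
    push_neg at hle
    have := key v0 hunit
    nlinarith
  have hbound : ∀ v : {v : Fin m → ℝ // ∑ j, (v j) ^ 2 = 1},
      (g * t)⁻¹ ≤ ∑ i, (A.mulVec v.1 i) ^ 2 := by
    intro v
    have h1 := key v.1 v.2
    calc (g * t)⁻¹ = (g * t)⁻¹ * 1 := (mul_one _).symm
      _ ≤ (g * t)⁻¹ * (g * t * ∑ i, (A.mulVec v.1 i) ^ 2) :=
          mul_le_mul_of_nonneg_left h1 (inv_nonneg.mpr hgt.le)
      _ = ∑ i, (A.mulVec v.1 i) ^ 2 := by rw [← mul_assoc, inv_mul_cancel₀ hgt.ne', one_mul]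
  have hne : Nonempty {v : Fin m → ℝ // ∑ j, (v j) ^ 2 = 1} := ⟨⟨v0, hunit⟩⟩
  exact lt_of_lt_of_le (inv_pos.mpr hgt) (le_ciInf hbound)

lemma inv_diag_le {n m : ℕ} (hm : 0 < m) (A : Matrix (Fin n) (Fin m) ℝ)
    (h : IsUnit (Aᵀ * A).det) (k : Fin m) :
    ((Aᵀ * A)⁻¹) k k ≤ (sminSq A)⁻¹ := by
  set G := Aᵀ * A with hG
  set w : Fin m → ℝ := G⁻¹ *ᵥ (fun j => if j = k then 1 else 0) with hw
  have hGw : G *ᵥ w = fun j => if j = k then 1 else 0 := by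
    rw [hw, Matrix.mulVec_mulVec, Matrix.mul_nonsing_inv _ h, Matrix.one_mulVec]
  have hwk : w k = G⁻¹ k k := by
    simp [hw, Matrix.mulVec, dotProduct]
  have hd : w ⬝ᵥ (G *ᵥ w) = G⁻¹ k k := by
    rw [hGw, ← hwk]
    simp [dotProduct]
  have hq : w ⬝ᵥ (G *ᵥ w) = ∑ i, (A.mulVec w i) ^ 2 := by
    rw [hG, ← Matrix.mulVec_mulVec, Matrix.dotProduct_mulVec, ← Matrix.mulVec_transpose,
      Matrix.transpose_transpose]
    simp [dotProduct, pow_two]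
  set d := G⁻¹ k k with hdd
  have hd0 : 0 ≤ d := by
    rw [← hd, hq]; exact Finset.sum_nonneg fun _ _ => sq_nonneg _
  have hray : sminSq A * ∑ j, (w j) ^ 2 ≤ d := by
    rw [← hd, hq]; exact sminSq_rayleigh A w
  have hwk2 : d ^ 2 ≤ ∑ j, (w j) ^ 2 := by
    rw [← hwk]
    exact Finset.single_le_sum (f := fun j => (w j) ^ 2) (fun j _ => sq_nonneg _) (by simp)
  have hpos := sminSq_pos hm A h
  have hle : sminSq A * d ^ 2 ≤ d :=
    le_trans (mul_le_mul_of_nonneg_left hwk2 (le_of_lt hpos)) hray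
  rcases eq_or_lt_of_le hd0 with h0 | h0
  · rw [← h0]; positivity
  · rw [← mul_le_mul_iff_right₀ hpos, mul_inv_cancel₀ hpos.ne']
    nlinarith

lemma selMat_mul_transpose {N k : ℕ} (I : Finset (Fin N)) (h : I.card = k) :
    selMat I h * (selMat I h)ᵀ = 1 := by
  ext a b
  simp only [selMat, Matrix.mul_apply, Matrix.transpose_apply, Matrix.of_apply,
    ite_mul, one_mul, zero_mul, Finset.sum_ite_eq, Finset.mem_univ, if_true]
  by_cases hab : a = b
  · subst hab; simp
  · have h2 : (↑(I.orderIsoOfFin h b) : Fin N) ≠ ↑(I.orderIsoOfFin h a) := by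
      intro e
      exact hab (((I.orderIsoOfFin h).injective (Subtype.coe_injective e))).symm
    simp only [Matrix.one_apply, if_neg h2, if_neg hab]

lemma selMat_row_zero {N k : ℕ} (I : Finset (Fin N)) (h : I.card = k)
    {α : Type*} [Fintype α] (Mx : Matrix (Fin k) α ℝ) {i : Fin N} (hi : i ∉ I) (c : α) :
    ((selMat I h)ᵀ * Mx) i c = 0 := by
  simp only [Matrix.mul_apply, Matrix.transpose_apply, selMat, Matrix.of_apply]
  refine Finset.sum_eq_zero fun a _ => ?_
  have h2 : (↑(I.orderIsoOfFin h a) : Fin N) ≠ i := fun e => hi (e ▸ (I.orderIsoOfFin h a).2)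
  rw [if_neg h2, zero_mul]

lemma trace_mul_transpose {p q : ℕ} (P Q : Matrix (Fin p) (Fin q) ℝ) :
    Matrix.trace (P * Qᵀ) = ∑ i, ∑ k, P i k * Q i k := by
  simp [Matrix.trace, Matrix.diag, Matrix.mul_apply]

lemma count_mem_powersetCard {N n : ℕ} (hn : 0 < n) (i : Fin N) :
    ((Finset.powersetCard n (Finset.univ : Finset (Fin N))).filter fun J => i ∈ J).card
      = (N - 1).choose (n - 1) := by
  have key : ((Finset.powersetCard n (Finset.univ : Finset (Fin N))).filter fun J => i ∈ J).card
      = (Finset.powersetCard (n-1) ((Finset.univ : Finset (Fin N)).erase i)).card := by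
    refine Finset.card_bij (fun J _ => J.erase i) ?_ ?_ ?_
    · intro J hJ
      rw [Finset.mem_filter, Finset.mem_powersetCard] at hJ
      rw [Finset.mem_powersetCard]
      exact ⟨Finset.erase_subset_erase i (Finset.subset_univ J), by
        rw [Finset.card_erase_of_mem hJ.2, hJ.1.2]⟩
    · intro J1 h1 J2 h2 he
      rw [Finset.mem_filter] at h1 h2
      rw [← Finset.insert_erase h1.2, ← Finset.insert_erase h2.2, he]
    · intro K hK
      rw [Finset.mem_powersetCard] at hK
      have hiK : i ∉ K := fun hc => (Finset.mem_erase.mp (hK.1 hc)).1 rfl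
      refine ⟨insert i K, ?_, ?_⟩
      · rw [Finset.mem_filter, Finset.mem_powersetCard]
        exact ⟨⟨Finset.subset_univ _, by rw [Finset.card_insert_of_notMem hiK, hK.2]; omega⟩,
          Finset.mem_insert_self i K⟩
      · rw [Finset.erase_insert hiK]
  rw [key, Finset.card_powersetCard, Finset.card_erase_of_mem (Finset.mem_univ i),
    Finset.card_univ, Fintype.card_fin]

lemma frob_eq_trace {N n m : ℕ} (S : Matrix (Fin n) (Fin N) ℝ)
    (A : Matrix (Fin n) (Fin m) ℝ) (hS : S * Sᵀ = 1) (h : IsUnit (Aᵀ * A).det) :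
    ∑ i, ∑ k, ((Sᵀ * A * (Aᵀ * A)⁻¹) i k) ^ 2 = Matrix.trace (Aᵀ * A)⁻¹ := by
  set B := Sᵀ * A * (Aᵀ * A)⁻¹ with hB
  have h1 : ∑ i, ∑ k, (B i k) ^ 2 = Matrix.trace (B * Bᵀ) := by
    rw [trace_mul_transpose]
    simp_rw [pow_two]
  have h2 : Bᵀ * B = (Aᵀ * A)⁻¹ := by
    rw [hB, Matrix.transpose_mul, Matrix.transpose_mul, Matrix.transpose_transpose,
      gram_inv_symm]
    simp only [Matrix.mul_assoc]
    rw [← Matrix.mul_assoc S Sᵀ, hS, Matrix.one_mul, ← Matrix.mul_assoc Aᵀ A,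
      ← Matrix.mul_assoc _ (Aᵀ * A) _, Matrix.nonsing_inv_mul _ h, Matrix.one_mul]
  rw [h1, Matrix.trace_mul_comm, h2]

lemma trace_gram_inv_le {n m : ℕ} (hm : 0 < m) (A : Matrix (Fin n) (Fin m) ℝ)
    (h : IsUnit (Aᵀ * A).det) :
    Matrix.trace (Aᵀ * A)⁻¹ ≤ (m : ℝ) * (sminSq A)⁻¹ := by
  rw [Matrix.trace]
  calc ∑ k, ((Aᵀ * A)⁻¹).diag k ≤ ∑ _k : Fin m, (sminSq A)⁻¹ :=
        Finset.sum_le_sum fun k _ => inv_diag_le hm A h k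
    _ = (m : ℝ) * (sminSq A)⁻¹ := by simp [mul_comm]

lemma prod_eq {N n m : ℕ} (S1 S2 : Matrix (Fin n) (Fin N) ℝ) (A1 A2 : Matrix (Fin n) (Fin m) ℝ) :
    S1ᵀ * A1 * (A1ᵀ * A1)⁻¹ * (A2ᵀ * A2)⁻¹ * A2ᵀ * S2
      = (S1ᵀ * A1 * (A1ᵀ * A1)⁻¹) * (S2ᵀ * A2 * (A2ᵀ * A2)⁻¹)ᵀ := by
  rw [Matrix.transpose_mul, Matrix.transpose_mul, Matrix.transpose_transpose, gram_inv_symm]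
  simp only [Matrix.mul_assoc]

noncomputable def Bmat (N M n m : ℕ) (X : Matrix (Fin N) (Fin M) ℝ)
    (F : Finset (Fin M)) (hF : F.card = m) (I : Finset (Fin N)) (hI : I.card = n) :
    Matrix (Fin N) (Fin m) ℝ :=
  (selMat I hI)ᵀ * mpMat N M n m X F hF I hI *
    ((mpMat N M n m X F hF I hI)ᵀ * mpMat N M n m X F hF I hI)⁻¹

lemma Bmat_row_zero (N M n m : ℕ) (X : Matrix (Fin N) (Fin M) ℝ)
    (F : Finset (Fin M)) (hF : F.card = m) (I : Finset (Fin N)) (hI : I.card = n)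
    {i : Fin N} (hi : i ∉ I) (k : Fin m) :
    Bmat N M n m X F hF I hI i k = 0 := by
  rw [Bmat, Matrix.mul_assoc]
  exact selMat_row_zero I hI _ hi k

/-- tr(AF) bound. -/
theorem trace_AF_le (N M n m : ℕ) (hm : 0 < m) (hmn : m ≤ n) (hn : n ≤ N)
    (X : Matrix (Fin N) (Fin M) ℝ) (F : Finset (Fin M)) (hF : F.card = m)
    (hrank : ∀ (I : Finset (Fin N)) (hI : I.card = n),
      IsUnit ((mpMat N M n m X F hF I hI)ᵀ * mpMat N M n m X F hF I hI).det) :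
    Matrix.trace (AF N M n m X F hF)
      ≤ ((m : ℝ) * n / N) * (N.choose n : ℝ)⁻¹ *
          ∑ I ∈ (Finset.powersetCard n (Finset.univ : Finset (Fin N))).attach,
            (sminSq (mpMat N M n m X F hF I.1 (Finset.mem_powersetCard.mp I.2).2))⁻¹ := by
  classical
  have hn0 : 0 < n := lt_of_lt_of_le hm hmn
  have hN0 : 0 < N := lt_of_lt_of_le hn0 hn
  set s := Finset.powersetCard n (Finset.univ : Finset (Fin N)) with hs
  set B : {x // x ∈ s} → Matrix (Fin N) (Fin m) ℝ :=
    fun I => Bmat N M n m X F hF I.1 (Finset.mem_powersetCard.mp I.2).2 with hB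
  set lam : {x // x ∈ s} → ℝ :=
    fun I => sminSq (mpMat N M n m X F hF I.1 (Finset.mem_powersetCard.mp I.2).2) with hlam
  set K : ℝ := ((N - 1).choose (n - 1) : ℝ) with hK
  set C : ℝ := (N.choose n : ℝ) with hC
  have hCpos : (0 : ℝ) < C := by
    rw [hC]; exact_mod_cast Nat.choose_pos hn
  -- Step 1: trace as quadruple sum
  have step1 : Matrix.trace (AF N M n m X F hF)
      = (C ^ 2)⁻¹ * ∑ I ∈ s.attach, ∑ J ∈ s.attach, ∑ i, ∑ k, B I i k * B J i k := by
    rw [AF, Matrix.trace_smul, smul_eq_mul]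
    congr 1
    rw [Matrix.trace_sum]
    refine Finset.sum_congr rfl fun I _ => ?_
    rw [Matrix.trace_sum]
    refine Finset.sum_congr rfl fun J _ => ?_
    rw [prod_eq, trace_mul_transpose]
    rfl
  -- pointwise zero lemma
  have hzero : ∀ (I : {x // x ∈ s}) (i : Fin N) (k : Fin m), i ∉ I.1 → B I i k = 0 := by
    intro I i k hi
    exact Bmat_row_zero N M n m X F hF I.1 _ hi k
  -- pointwise AM-GM bound
  have hpt : ∀ (I J : {x // x ∈ s}) (i : Fin N) (k : Fin m),
      B I i k * B J i k ≤
        (1 / 2) * ((if i ∈ J.1 then (B I i k) ^ 2 else 0)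
          + (if i ∈ I.1 then (B J i k) ^ 2 else 0)) := by
    intro I J i k
    by_cases hiI : i ∈ I.1
    · by_cases hiJ : i ∈ J.1
      · rw [if_pos hiI, if_pos hiJ]
        nlinarith [sq_nonneg (B I i k - B J i k)]
      · rw [hzero J i k hiJ, mul_zero, if_neg hiJ, if_pos hiI]
        norm_num
    · rw [hzero I i k hiI, zero_mul, if_neg hiI]
      simp
  -- counting
  have hcount : ∀ (i : Fin N) (c : ℝ),
      ∑ J ∈ s.attach, (if i ∈ J.1 then c else 0) = K * c := by
    intro i c
    rw [Finset.sum_attach s (fun J => if i ∈ J then c else 0), ← Finset.sum_filter,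
      Finset.sum_const, hs, count_mem_powersetCard hn0 i, nsmul_eq_mul, hK]
  -- partial-sum identity
  have hT1 : ∀ I : {x // x ∈ s},
      ∑ J ∈ s.attach, ∑ i, ∑ k, (if i ∈ J.1 then (B I i k) ^ 2 else 0)
        = K * ∑ i, ∑ k, (B I i k) ^ 2 := by
    intro I
    rw [Finset.sum_comm]
    rw [Finset.mul_sum]
    refine Finset.sum_congr rfl fun i _ => ?_
    rw [Finset.sum_comm, Finset.mul_sum]
    refine Finset.sum_congr rfl fun k _ => ?_
    exact hcount i _
  -- Step 2
  have step2 : ∑ I ∈ s.attach, ∑ J ∈ s.attach, ∑ i, ∑ k, B I i k * B J i k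
      ≤ K * ∑ I ∈ s.attach, ∑ i, ∑ k, (B I i k) ^ 2 := by
    have h1 : ∑ I ∈ s.attach, ∑ J ∈ s.attach, ∑ i, ∑ k, B I i k * B J i k
        ≤ ∑ I ∈ s.attach, ∑ J ∈ s.attach, ∑ i, ∑ k,
            (1 / 2) * ((if i ∈ J.1 then (B I i k) ^ 2 else 0)
              + (if i ∈ I.1 then (B J i k) ^ 2 else 0)) := by
      refine Finset.sum_le_sum fun I _ => Finset.sum_le_sum fun J _ =>
        Finset.sum_le_sum fun i _ => Finset.sum_le_sum fun k _ => hpt I J i k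
    have h2 : ∑ I ∈ s.attach, ∑ J ∈ s.attach, ∑ i, ∑ k,
            (1 / 2) * ((if i ∈ J.1 then (B I i k) ^ 2 else 0)
              + (if i ∈ I.1 then (B J i k) ^ 2 else 0))
        = K * ∑ I ∈ s.attach, ∑ i, ∑ k, (B I i k) ^ 2 := by
      have e1 : ∑ I ∈ s.attach, ∑ J ∈ s.attach, ∑ i, ∑ k,
          (if i ∈ J.1 then (B I i k) ^ 2 else 0)
          = K * ∑ I ∈ s.attach, ∑ i, ∑ k, (B I i k) ^ 2 := by
        rw [Finset.mul_sum]
        exact Finset.sum_congr rfl fun I _ => hT1 I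
      have e2 : ∑ I ∈ s.attach, ∑ J ∈ s.attach, ∑ i, ∑ k,
          (if i ∈ I.1 then (B J i k) ^ 2 else 0)
          = K * ∑ I ∈ s.attach, ∑ i, ∑ k, (B I i k) ^ 2 := by
        rw [Finset.sum_comm]
        rw [Finset.mul_sum]
        exact Finset.sum_congr rfl fun J _ => hT1 J
      calc ∑ I ∈ s.attach, ∑ J ∈ s.attach, ∑ i, ∑ k,
            (1 / 2) * ((if i ∈ J.1 then (B I i k) ^ 2 else 0)
              + (if i ∈ I.1 then (B J i k) ^ 2 else 0))
          = (1/2) * ((∑ I ∈ s.attach, ∑ J ∈ s.attach, ∑ i, ∑ k,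
              (if i ∈ J.1 then (B I i k) ^ 2 else 0))
            + ∑ I ∈ s.attach, ∑ J ∈ s.attach, ∑ i, ∑ k,
              (if i ∈ I.1 then (B J i k) ^ 2 else 0)) := by
            simp only [Finset.mul_sum, Finset.sum_add_distrib, mul_add]
        _ = K * ∑ I ∈ s.attach, ∑ i, ∑ k, (B I i k) ^ 2 := by
            rw [e1, e2]; ring
    exact h1.trans (le_of_eq h2)
  -- Step 3: Frobenius bound
  have step3 : ∑ I ∈ s.attach, ∑ i, ∑ k, (B I i k) ^ 2
      ≤ (m : ℝ) * ∑ I ∈ s.attach, (lam I)⁻¹ := by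
    rw [Finset.mul_sum]
    refine Finset.sum_le_sum fun I _ => ?_
    have hI := (Finset.mem_powersetCard.mp I.2).2
    have e : ∑ i, ∑ k, (B I i k) ^ 2
        = Matrix.trace ((mpMat N M n m X F hF I.1 hI)ᵀ * mpMat N M n m X F hF I.1 hI)⁻¹ :=
      frob_eq_trace _ _ (selMat_mul_transpose I.1 hI) (hrank I.1 hI)
    rw [e, hlam]
    exact trace_gram_inv_le hm _ (hrank I.1 hI)
  -- counting identity in ℝ
  have hid : (N : ℝ) * K = C * n := by
    rw [hK, hC]
    have h := Nat.add_one_mul_choose_eq (N - 1) (n - 1)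
    have e1 : N - 1 + 1 = N := Nat.succ_pred_eq_of_pos hN0
    have e2 : n - 1 + 1 = n := Nat.succ_pred_eq_of_pos hn0
    rw [e1, e2] at h
    exact_mod_cast congrArg (Nat.cast : ℕ → ℝ) h
  have hKpos : (0:ℝ) ≤ K := by rw [hK]; positivity
  have hlampos : (0:ℝ) ≤ ∑ I ∈ s.attach, (lam I)⁻¹ := by
    refine Finset.sum_nonneg fun I _ => inv_nonneg.mpr ?_
    rw [hlam]
    exact Real.iInf_nonneg fun v => Finset.sum_nonneg fun i _ => sq_nonneg _
  -- final assembly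
  rw [step1]
  have final : (C ^ 2)⁻¹ * (K * ((m : ℝ) * ∑ I ∈ s.attach, (lam I)⁻¹))
      = ((m : ℝ) * n / N) * C⁻¹ * ∑ I ∈ s.attach, (lam I)⁻¹ := by
    have hN' : (N:ℝ) ≠ 0 := by positivity
    have hC' : C ≠ 0 := ne_of_gt hCpos
    have hKval : K = C * (n:ℝ) / (N:ℝ) := by
      rw [eq_div_iff hN']
      linarith [hid]
    rw [hKval]
    field_simp
  calc (C ^ 2)⁻¹ * ∑ I ∈ s.attach, ∑ J ∈ s.attach, ∑ i, ∑ k, B I i k * B J i k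
      ≤ (C ^ 2)⁻¹ * (K * ((m : ℝ) * ∑ I ∈ s.attach, (lam I)⁻¹)) := by
        refine mul_le_mul_of_nonneg_left ?_ (by positivity)
        exact step2.trans (mul_le_mul_of_nonneg_left step3 hKpos)
    _ = ((m : ℝ) * n / N) * C⁻¹ * ∑ I ∈ s.attach, (lam I)⁻¹ := final
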